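/- Define a left action of the braid group B_n on (ℤ/rℤ)^n by letting each generator σ_i act via the transposition (i, i+1) permuting coordinates (the action factors through S_n). Then the map φ_r : B_n → (ℤ/rℤ)^n determined by φ_r(σ_i) = e_{i+1} on the standard Artin generators extends to a well-defined crossed homomorphism, i.e. φ_r(αβ) = φ_r(α) + α·φ_r(β) for all α, β ∈ B_n. -/

import Mathlib

/-- The braid relations on `m` generators `σ_1, ..., σ_m` (indexed here by `Fin m`):
`σ i σ j = σ j σ i` for `|i - j| ≥ 2` and `σ i σ (i+1) σ i = σ (i+1) σ i σ (i+1)`. -/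
def braidRels (m : ℕ) : Set (FreeGroup (Fin m)) :=
  { w | (∃ i j : Fin m, (i : ℕ) + 2 ≤ (j : ℕ) ∧
          w = FreeGroup.of i * FreeGroup.of j * (FreeGroup.of i)⁻¹ * (FreeGroup.of j)⁻¹) ∨
        (∃ i j : Fin m, (i : ℕ) + 1 = (j : ℕ) ∧
          w = FreeGroup.of i * FreeGroup.of j * FreeGroup.of i *
              (FreeGroup.of j * FreeGroup.of i * FreeGroup.of j)⁻¹) }

/-- The braid group on `m + 1` strands, presented with `m` Artin generators.
`BraidGroup (n-1)` is the braid group `B_n`. -/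
abbrev BraidGroup (m : ℕ) : Type := PresentedGroup (braidRels m)

/-- The `k`-th Artin generator (`0`-indexed: `braidGen k` is the Artin generator
`σ_{k+1}` of the paper, braiding strands `k` and `k+1` in `0`-indexed numbering);
junk value `1` if `k` is out of range. -/
def braidGen {m : ℕ} (k : ℕ) : BraidGroup m :=
  if h : k < m then PresentedGroup.of (⟨k, h⟩ : Fin m) else 1



/-- The permutation action on `Multiplicative (Fin n → ZMod r)`. -/
def permAut (n r : ℕ) : Equiv.Perm (Fin n) →* MulAut (Multiplicative (Fin n → ZMod r)) where
  toFun p :=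
    { toFun := fun v => v ∘ p.symm
      invFun := fun v => v ∘ p
      left_inv := fun v => by funext t; exact congrArg v (p.symm_apply_apply t)
      right_inv := fun v => by funext t; exact congrArg v (p.apply_symm_apply t)
      map_mul' := fun v w => rfl }
  map_one' := rfl
  map_mul' := fun p q => rfl

lemma single_comp_symm {n r : ℕ} (p : Equiv.Perm (Fin n)) (a : Fin n) :
    (Pi.single a (1 : ZMod r)) ∘ p.symm = Pi.single (p a) (1 : ZMod r) := by
  funext t
  simp [Function.comp, Pi.single_apply, Equiv.symm_apply_eq]

lemma permAut_single (n r : ℕ) (p : Equiv.Perm (Fin n)) (a : Fin n) :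
    permAut n r p (Multiplicative.ofAdd (Pi.single a (1 : ZMod r))) =
      Multiplicative.ofAdd (Pi.single (p a) (1 : ZMod r)) :=
  congrArg Multiplicative.ofAdd (single_comp_symm p a)

lemma swap_braid {n : ℕ} (a b c : Fin n) (hab : a ≠ b) (hac : a ≠ c) (hbc : b ≠ c) :
    Equiv.swap a b * Equiv.swap b c * Equiv.swap a b =
      Equiv.swap b c * Equiv.swap a b * Equiv.swap b c := by
  have h1 : Equiv.swap b a * Equiv.swap c b * Equiv.swap b a = Equiv.swap a c :=
    Equiv.swap_mul_swap_mul_swap (Ne.symm hbc) (Ne.symm hac)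
  have h2 : Equiv.swap b c * Equiv.swap a b * Equiv.swap b c = Equiv.swap c a :=
    Equiv.swap_mul_swap_mul_swap hab hac
  rw [Equiv.swap_comm b a, Equiv.swap_comm c b] at h1
  rw [h1, h2, Equiv.swap_comm]

lemma swap_comm_disj {n : ℕ} (a b c d : Fin n) (h1 : (a : ℕ) + 1 = b) (h2 : (c : ℕ) + 1 = d)
    (h3 : (a : ℕ) + 2 ≤ c) :
    Equiv.swap a b * Equiv.swap c d = Equiv.swap c d * Equiv.swap a b := by
  ext x
  simp only [Equiv.Perm.mul_apply, Equiv.swap_apply_def, Fin.ext_iff]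
  split_ifs <;> omega

/-- Commutation relation in the semidirect product. -/
lemma comm_sdp (n r : ℕ) (a b c d : Fin n) (h1 : (a : ℕ) + 1 = b) (h2 : (c : ℕ) + 1 = d)
    (h3 : (a : ℕ) + 2 ≤ c) :
    (⟨Multiplicative.ofAdd (Pi.single b 1), Equiv.swap a b⟩ :
        SemidirectProduct (Multiplicative (Fin n → ZMod r)) (Equiv.Perm (Fin n)) (permAut n r)) *
      ⟨Multiplicative.ofAdd (Pi.single d 1), Equiv.swap c d⟩ =
    ⟨Multiplicative.ofAdd (Pi.single d 1), Equiv.swap c d⟩ *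
      ⟨Multiplicative.ofAdd (Pi.single b 1), Equiv.swap a b⟩ := by
  apply SemidirectProduct.ext
  · simp only [SemidirectProduct.mul_left, permAut_single]
    rw [Equiv.swap_apply_of_ne_of_ne (by simp [Fin.ext_iff]; omega) (by simp [Fin.ext_iff]; omega),
      Equiv.swap_apply_of_ne_of_ne (by simp [Fin.ext_iff]; omega) (by simp [Fin.ext_iff]; omega),
      mul_comm]
  · exact swap_comm_disj a b c d h1 h2 h3

/-- Braid relation in the semidirect product. -/
lemma braid_sdp (n r : ℕ) (a b c : Fin n) (hab : a ≠ b) (hac : a ≠ c) (hbc : b ≠ c) :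
    (⟨Multiplicative.ofAdd (Pi.single b 1), Equiv.swap a b⟩ :
        SemidirectProduct (Multiplicative (Fin n → ZMod r)) (Equiv.Perm (Fin n)) (permAut n r)) *
      ⟨Multiplicative.ofAdd (Pi.single c 1), Equiv.swap b c⟩ *
      ⟨Multiplicative.ofAdd (Pi.single b 1), Equiv.swap a b⟩ =
    ⟨Multiplicative.ofAdd (Pi.single c 1), Equiv.swap b c⟩ *
      ⟨Multiplicative.ofAdd (Pi.single b 1), Equiv.swap a b⟩ *
      ⟨Multiplicative.ofAdd (Pi.single c 1), Equiv.swap b c⟩ := by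
  apply SemidirectProduct.ext
  · simp only [SemidirectProduct.mul_left, SemidirectProduct.mul_right, map_mul,
      MulAut.mul_apply, permAut_single, Equiv.swap_apply_left, Equiv.swap_apply_right,
      Equiv.swap_apply_of_ne_of_ne (Ne.symm hac) (Ne.symm hbc)]
    simp [mul_comm, mul_left_comm, mul_assoc]
  · exact swap_braid a b c hab hac hbc

/-- The images of the Artin generators in the semidirect product. -/
def braidImg (n r : ℕ) (i : Fin (n - 1)) :
    SemidirectProduct (Multiplicative (Fin n → ZMod r)) (Equiv.Perm (Fin n)) (permAut n r) :=
  ⟨Multiplicative.ofAdd (Pi.single ⟨(i : ℕ) + 1, by have := i.isLt; omega⟩ 1),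
    Equiv.swap ⟨(i : ℕ), by have := i.isLt; omega⟩ ⟨(i : ℕ) + 1, by have := i.isLt; omega⟩⟩

lemma braidImg_rels (n r : ℕ) :
    ∀ w ∈ braidRels (n - 1), FreeGroup.lift (braidImg n r) w = 1 := by
  rintro w (⟨i, j, hij, rfl⟩ | ⟨i, j, hij, rfl⟩) <;>
      simp only [map_mul, map_inv, FreeGroup.lift_apply_of]
  · rw [mul_inv_eq_one, mul_inv_eq_iff_eq_mul]
    exact comm_sdp n r _ _ _ _ rfl rfl hij
  · rw [mul_inv_eq_one]
    obtain ⟨j, hjlt⟩ := j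
    have hij' : (i : ℕ) + 1 = j := hij
    subst hij'
    exact braid_sdp n r ⟨(i : ℕ), by omega⟩ ⟨(i : ℕ) + 1, by omega⟩ ⟨(i : ℕ) + 1 + 1, by omega⟩
      (by simp [Fin.ext_iff]) (by simp [Fin.ext_iff]; omega) (by simp [Fin.ext_iff])

/-- With `B_n` acting on `(ℤ/rℤ)ⁿ` through the permutation representation
`π : B_n → S_n` (each `σ_i` mapping to the transposition `(i, i+1)`), the assignment
`φ_r(σ_i) = e_{i+1}` extends to a well-defined crossed homomorphism
`φ_r : B_n → (ℤ/rℤ)ⁿ`, i.e. `φ_r(αβ) = φ_r(α) + α·φ_r(β)` for all `α, β`.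
(All indices are `0`-based: the generator `braidGen k` is the paper's `σ_{k+1}`, its
permutation image is the transposition of positions `k, k+1`, and its `φ_r`-value is the
standard basis vector at position `k+1`.) -/
theorem stmt_3 (n r : ℕ) (hn : 2 ≤ n) :
    ∃ (π : BraidGroup (n - 1) →* Equiv.Perm (Fin n))
      (φ : BraidGroup (n - 1) → (Fin n → ZMod r)),
      (∀ k : ℕ, ∀ hk : k + 1 < n,
        π (braidGen k) = Equiv.swap ⟨k, by omega⟩ ⟨k + 1, hk⟩) ∧
      (∀ k : ℕ, ∀ hk : k + 1 < n,
        φ (braidGen k) = Pi.single (⟨k + 1, hk⟩ : Fin n) 1) ∧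
      (∀ α β : BraidGroup (n - 1),
        φ (α * β) = φ α + fun t => φ β ((π α)⁻¹ t)) := by
  classical
  set F := PresentedGroup.toGroup (braidImg_rels n r) with hF
  refine ⟨SemidirectProduct.rightHom.comp F, fun α => Multiplicative.toAdd ((F α).left),
    ?_, ?_, ?_⟩
  · intro k hk
    have hk' : k < n - 1 := by omega
    simp [braidGen, hk', hF, PresentedGroup.toGroup.of, braidImg, SemidirectProduct.rightHom]
  · intro k hk
    have hk' : k < n - 1 := by omega
    simp [braidGen, hk', hF, PresentedGroup.toGroup.of, braidImg]
  · intro α β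
    show Multiplicative.toAdd ((F (α * β)).left) = _
    rw [map_mul, SemidirectProduct.mul_left]
    rfl
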